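/- Define the block matrix Z* ∈ ℝ^{V×V} whose (C_l, C_l) diagonal block is I/|C_l| and whose (C_i, C_j) off-diagonal block (i≠j) is the all-ones matrix scaled by 1/(|C_i||C_j|). Then the eigenvalues of Z* are: Σ_{l=1}^k 1/|C_l| with multiplicity one, 0 with multiplicity k−1, and 1/|C_l| with multiplicity |C_l|−1 for each l. -/

import Mathlib

open Matrix Polynomial Finset


/-- The block matrix `Z*`: diagonal blocks `I/|C_l|`, off-diagonal `(C_i,C_j)` blocks
all-ones scaled by `1/(|C_i||C_j|)`.  `π` assigns each vertex to its part. -/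
noncomputable def Zstar {V : Type*} [Fintype V] [DecidableEq V] {k : ℕ}
    (C : Fin k → Finset V) (π : V → Fin k) : Matrix V V ℝ :=
  Matrix.of fun a b =>
    if π a = π b then (if a = b then ((C (π a)).card : ℝ)⁻¹ else 0)
    else (((C (π a)).card : ℝ) * ((C (π b)).card : ℝ))⁻¹

lemma my_eval_charpoly {n : Type*} [Fintype n] [DecidableEq n] (M : Matrix n n ℝ) (x : ℝ) :
    M.charpoly.eval x = (Matrix.scalar n x - M).det := by
  rw [Matrix.charpoly, _root_.eval_det, matPolyEquiv_charmatrix]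
  simp

section Aux
variable {V : Type*} [Fintype V] [DecidableEq V] {k : ℕ}

lemma my_filter_eq (C : Fin k → Finset V)
    (hdisj : ∀ i j : Fin k, i ≠ j → Disjoint (C i) (C j))
    (π : V → Fin k) (hπ : ∀ v : V, v ∈ C (π v)) (l : Fin k) :
    Finset.univ.filter (fun v => π v = l) = C l := by
  ext v
  simp only [Finset.mem_filter, Finset.mem_univ, true_and]
  constructor
  · rintro rfl; exact hπ v
  · intro hv
    by_contra h
    exact Finset.disjoint_left.mp (hdisj (π v) l h) (hπ v) hv

set_option maxHeartbeats 1000000 in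
lemma detAux (hk : 0 < k) (C : Fin k → Finset V)
    (hdisj : ∀ i j : Fin k, i ≠ j → Disjoint (C i) (C j))
    (hne : ∀ l : Fin k, (C l).Nonempty)
    (π : V → Fin k) (hπ : ∀ v : V, v ∈ C (π v)) (x : ℝ) (hx0 : x ≠ 0)
    (hxl : ∀ l : Fin k, x - ((C l).card : ℝ)⁻¹ ≠ 0) :
    (Matrix.scalar V x - Zstar C π).det
      = (x - ∑ l : Fin k, (((C l).card : ℝ))⁻¹) * x ^ (k - 1)
        * ∏ l : Fin k, (x - ((C l).card : ℝ)⁻¹) ^ ((C l).card - 1) := by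
  classical
  set c : Fin k → ℝ := fun l => ((C l).card : ℝ) with hc
  have hcpos : ∀ l, 0 < c l := fun l => by
    simpa [hc] using Finset.card_pos.mpr (hne l)
  have hcne : ∀ l, c l ≠ 0 := fun l => (hcpos l).ne'
  have hfil : ∀ l, Finset.univ.filter (fun v => π v = l) = C l :=
    my_filter_eq C hdisj π hπ
  set d : V → ℝ := fun v => x - (c (π v))⁻¹ with hd
  have hdne : ∀ v, d v ≠ 0 := fun v => hxl (π v)
  set M : Matrix V V ℝ := Matrix.diagonal d with hM
  set M' : Matrix V V ℝ := Matrix.diagonal (fun v => (d v)⁻¹) with hM'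
  set U : Matrix V (Fin k) ℝ := Matrix.of (fun v l => if π v = l then (1:ℝ) else 0) with hU
  set W : Matrix (Fin k) V ℝ :=
    Matrix.of (fun l v => if π v = l then (c l * c l)⁻¹ else 0) with hW
  set g : V → ℝ := fun v => (c (π v))⁻¹ with hg
  set y : V → ℝ := fun v => (x * c (π v))⁻¹ with hy
  have hMM' : M * M' = 1 := by
    have h1 : (fun v => d v * (d v)⁻¹) = fun _ => (1:ℝ) :=
      funext fun v => mul_inv_cancel₀ (hdne v)
    rw [hM, hM', diagonal_mul_diagonal, h1, Matrix.diagonal_one]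
  -- entries of U * W
  have hUW : ∀ a b : V, (U * W) a b = if π b = π a then (c (π a) * c (π a))⁻¹ else 0 := by
    intro a b
    rw [Matrix.mul_apply]
    simp only [hU, hW, Matrix.of_apply, ite_mul, one_mul, zero_mul]
    rw [Finset.sum_ite_eq]
    simp only [Finset.mem_univ, if_true]
  -- step A : scalar x - Zstar = (M + U*W) - col g * row g
  have hA : Matrix.scalar V x - Zstar C π
      = (M + U * W) - Matrix.replicateCol Unit g * Matrix.replicateRow Unit g := by
    ext a b
    have hcr : (Matrix.replicateCol Unit g * Matrix.replicateRow Unit g) a b = g a * g b := by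
      simp [Matrix.mul_apply]
    simp only [Matrix.sub_apply, Matrix.add_apply, hcr, hUW a b]
    rw [Matrix.scalar_apply]
    by_cases hab : a = b
    · subst hab
      simp [Zstar, hM, Matrix.diagonal_apply_eq, hd, hg, mul_inv]
      rfl
    · rw [Matrix.diagonal_apply_ne _ hab, hM, Matrix.diagonal_apply_ne _ hab]
      by_cases hpi : π a = π b
      · simp [Zstar, hab, hpi, hg, mul_inv]
      · have : ¬ π b = π a := fun h => hpi h.symm
        simp [Zstar, hpi, this, hg, mul_inv, mul_comm]
        rfl
  -- (M + U*W) *ᵥ y = g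
  have hsum : ∀ a : V, (∑ b : V, (if π b = π a then (c (π a) * c (π a))⁻¹ else 0) * y b)
      = c (π a) * ((c (π a) * c (π a))⁻¹ * (x * c (π a))⁻¹) := by
    intro a
    have : ∀ b : V, (if π b = π a then (c (π a) * c (π a))⁻¹ else 0) * y b
        = if π b = π a then (c (π a) * c (π a))⁻¹ * (x * c (π a))⁻¹ else 0 := by
      intro b
      by_cases h : π b = π a
      · simp [h, hy]
      · simp [h]
    rw [Finset.sum_congr rfl (fun b _ => this b), ← Finset.sum_filter, hfil, Finset.sum_const]
    simp [hc, mul_comm]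
  have hNy : (M + U * W) *ᵥ y = g := by
    funext a
    rw [Matrix.add_mulVec]
    have h1 : (M *ᵥ y) a = d a * y a := by rw [hM, Matrix.mulVec_diagonal]
    have h2 : ((U * W) *ᵥ y) a = ∑ b : V, (if π b = π a then (c (π a) * c (π a))⁻¹ else 0) * y b := by
      rw [Matrix.mulVec]
      simp only [dotProduct]
      exact Finset.sum_congr rfl fun b _ => by rw [hUW a b]
    rw [Pi.add_apply, h1, h2, hsum a]
    simp only [hd, hy, hg]
    have hca := hcne (π a)
    field_simp
    ring
  -- factorization 1
  have hfac1 : Matrix.scalar V x - Zstar C π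
      = (M + U * W) * (1 - Matrix.replicateCol Unit y * Matrix.replicateRow Unit g) := by
    rw [Matrix.mul_sub, Matrix.mul_one, ← Matrix.mul_assoc, ← Matrix.replicateCol_mulVec, hNy, hA]
  have hfac2 : M + U * W = M * (1 + M' * U * W) := by
    rw [Matrix.mul_add, Matrix.mul_one, ← Matrix.mul_assoc, ← Matrix.mul_assoc, hMM',
      Matrix.one_mul]
  have hWMU : W * (M' * U) = Matrix.diagonal (fun l => (c l)⁻¹ * (x - (c l)⁻¹)⁻¹) := by
    have hMU : M' * U = Matrix.of (fun v m => (d v)⁻¹ * (if π v = m then (1:ℝ) else 0)) := by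
      ext v m
      rw [hM', Matrix.of_apply, Matrix.diagonal_mul]
      rfl
    ext l m
    rw [Matrix.mul_apply]
    by_cases hlm : l = m
    · subst hlm
      rw [Matrix.diagonal_apply_eq]
      have hterm : ∀ v : V, W l v * (M' * U) v l
          = if π v = l then (c l * c l)⁻¹ * (x - (c l)⁻¹)⁻¹ else 0 := by
        intro v
        rw [hMU]
        by_cases h : π v = l
        · simp [hW, h, hd, mul_comm]
        · simp [hW, h]
      rw [Finset.sum_congr rfl fun v _ => hterm v, ← Finset.sum_filter, hfil,
        Finset.sum_const, nsmul_eq_mul]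
      have hcl : ((C l).card : ℝ) = c l := rfl
      have := hcne l
      rw [hcl]
      field_simp
    · rw [Matrix.diagonal_apply_ne _ hlm]
      refine Finset.sum_eq_zero fun v _ => ?_
      rw [hMU]
      by_cases h : π v = l
      · have h2 : ¬ π v = m := fun hh => hlm (h ▸ hh)
        simp [hW, h, h2]
        exact fun hh => absurd hh hlm
      · simp [hW, h]
  -- determinant pieces
  have hdet3 : (1 - Matrix.replicateCol Unit y * Matrix.replicateRow Unit g).det = 1 - g ⬝ᵥ y := by
    rw [Matrix.det_one_sub_mul_comm, Matrix.det_unique]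
    simp [Matrix.replicateRow_mul_replicateCol_apply]
  have hdet2 : (1 + M' * U * W).det
      = ∏ l : Fin k, (1 + (c l)⁻¹ * (x - (c l)⁻¹)⁻¹) := by
    rw [Matrix.det_one_add_mul_comm, hWMU, ← Matrix.diagonal_one, Matrix.diagonal_add,
      Matrix.det_diagonal]
  have hdet1 : M.det = ∏ l : Fin k, (x - (c l)⁻¹) ^ (C l).card := by
    rw [hM, Matrix.det_diagonal, ← Finset.prod_fiberwise Finset.univ π d]
    refine Finset.prod_congr rfl fun l _ => ?_
    have hcg : ∀ v ∈ Finset.univ.filter (fun v => π v = l), d v = x - (c l)⁻¹ := by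
      intro v hv
      rcases Finset.mem_filter.mp hv with ⟨-, h⟩
      simp [hd, h]
    rw [Finset.prod_congr rfl hcg, Finset.prod_const, hfil]
  have hgy : g ⬝ᵥ y = x⁻¹ * ∑ l : Fin k, (c l)⁻¹ := by
    rw [dotProduct, ← Finset.sum_fiberwise Finset.univ π (fun v => g v * y v),
      Finset.mul_sum]
    refine Finset.sum_congr rfl fun l _ => ?_
    have hcg : ∀ v ∈ Finset.univ.filter (fun v => π v = l),
        g v * y v = (c l)⁻¹ * (x * c l)⁻¹ := by
      intro v hv
      rcases Finset.mem_filter.mp hv with ⟨-, h⟩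
      simp [hg, hy, h]
    rw [Finset.sum_congr rfl hcg, Finset.sum_const, hfil, nsmul_eq_mul]
    have hcl : ((C l).card : ℝ) = c l := rfl
    have := hcne l
    rw [hcl]
    field_simp
    try ring
  -- assemble
  have hdet : (Matrix.scalar V x - Zstar C π).det
      = ((∏ l : Fin k, (x - (c l)⁻¹) ^ (C l).card)
          * ∏ l : Fin k, (1 + (c l)⁻¹ * (x - (c l)⁻¹)⁻¹))
        * (1 - x⁻¹ * ∑ l : Fin k, (c l)⁻¹) := by
    rw [hfac1, Matrix.det_mul, hfac2, Matrix.det_mul, hdet3, hdet2, hdet1, hgy]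
  rw [hdet, ← Finset.prod_mul_distrib]
  have key : ∀ l : Fin k, (x - (c l)⁻¹) ^ (C l).card * (1 + (c l)⁻¹ * (x - (c l)⁻¹)⁻¹)
      = x * (x - (c l)⁻¹) ^ ((C l).card - 1) := by
    intro l
    have h1 : (C l).card = ((C l).card - 1) + 1 :=
      (Nat.sub_add_cancel (Finset.card_pos.mpr (hne l))).symm
    have h2 : (x - (c l)⁻¹) * (1 + (c l)⁻¹ * (x - (c l)⁻¹)⁻¹) = x := by
      have hxc := hxl l
      have : (x - (c l)⁻¹) * ((c l)⁻¹ * (x - (c l)⁻¹)⁻¹) = (c l)⁻¹ := by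
        rw [mul_comm ((c l)⁻¹), ← mul_assoc, mul_inv_cancel₀ hxc, one_mul]
      rw [mul_add, mul_one, this]
      ring
    nth_rewrite 1 [h1]
    rw [pow_succ, mul_assoc, h2]
    ring
  rw [Finset.prod_congr rfl fun l _ => key l, Finset.prod_mul_distrib, Finset.prod_const,
    Finset.card_univ, Fintype.card_fin]
  have hxk : x ^ k = x ^ (k - 1) * x := by
    rw [← pow_succ, Nat.sub_add_cancel hk]
  have hxs : x ^ k * (1 - x⁻¹ * ∑ l : Fin k, (c l)⁻¹)
      = (x - ∑ l : Fin k, (c l)⁻¹) * x ^ (k - 1) := by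
    rw [hxk]
    field_simp
  rw [mul_right_comm, hxs]

end Aux

theorem stmt4 {V : Type*} [Fintype V] [DecidableEq V] {k : ℕ} (hk : 0 < k)
    (C : Fin k → Finset V)
    (hdisj : ∀ i j : Fin k, i ≠ j → Disjoint (C i) (C j))
    (hne : ∀ l : Fin k, (C l).Nonempty)
    (π : V → Fin k) (hπ : ∀ v : V, v ∈ C (π v)) :
    (Zstar C π).charpoly
      = (Polynomial.X - Polynomial.C (∑ l : Fin k, (((C l).card : ℝ))⁻¹))
        * Polynomial.X ^ (k - 1)
        * ∏ l : Fin k,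
            (Polynomial.X - Polynomial.C (((C l).card : ℝ)⁻¹)) ^ ((C l).card - 1) := by
  apply Polynomial.eq_of_infinite_eval_eq
  have hfin : ({0} ∪ Set.range (fun l : Fin k => ((C l).card : ℝ)⁻¹)).Finite :=
    (Set.finite_singleton 0).union (Set.finite_range _)
  apply hfin.infinite_compl.mono
  intro x hx
  simp only [Set.mem_compl_iff, Set.mem_union, Set.mem_singleton_iff, Set.mem_range,
    not_or, not_exists] at hx
  obtain ⟨hx0, hxr⟩ := hx
  have hxl : ∀ l : Fin k, x - ((C l).card : ℝ)⁻¹ ≠ 0 := fun l =>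
    sub_ne_zero_of_ne fun h => hxr l (h.symm)
  show Polynomial.eval x _ = Polynomial.eval x _
  rw [my_eval_charpoly, detAux hk C hdisj hne π hπ x hx0 hxl]
  rw [Polynomial.eval_mul, Polynomial.eval_mul, Polynomial.eval_prod]
  simp only [Polynomial.eval_pow, Polynomial.eval_sub, Polynomial.eval_X, Polynomial.eval_C]
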